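/- For t > 0 and positive integer K, the inverse of the (K+1)×(K+1) matrix Ψ(t) with entries e^{(i-1)(j-1)t} satisfies ‖Ψ(t)^{-1}‖_F ≤ C(t)^{-1} K (K+1) (e^t/(e^t − 1))^K, where C(t) = exp(−2e/(e^t − 1)^2) and ‖·‖_F is the Frobenius norm. -/

import Mathlib

open Finset Matrix

open Polynomial

lemma geomBound {r : ℝ} (h0 : 0 ≤ r) (h1 : r < 1) (n : ℕ) :
    ∑ i ∈ Finset.range n, r ^ i ≤ (1 - r)⁻¹ := by
  have h : 0 < 1 - r := by linarith
  rw [geom_sum_eq (by linarith : r ≠ 1)]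
  have heq : (r ^ n - 1) / (r - 1) = (1 - r ^ n) / (1 - r) := by
    rw [div_eq_div_iff (by linarith) (by linarith)]; ring
  rw [heq, ← one_div]
  gcongr
  nlinarith [pow_nonneg h0 n]

lemma anal (u : ℝ) :
    Real.exp u * (1 + 2*u) ≤ 2 * Real.exp (2 * Real.exp 1 * u^2) := by
  have h1 : 1 + 2*u ≤ Real.exp (2*u) := by have := Real.add_one_le_exp (2*u); linarith
  have h2 : Real.exp u * (1 + 2*u) ≤ Real.exp u * Real.exp (2*u) :=
    mul_le_mul_of_nonneg_left h1 (Real.exp_nonneg u)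
  rw [← Real.exp_add] at h2
  refine h2.trans ?_
  have hlog : Real.exp (u + 2*u) ≤ Real.exp (Real.log 2 + 2 * Real.exp 1 * u^2) := by
    apply Real.exp_le_exp.2
    nlinarith [Real.log_two_gt_d9, Real.exp_one_gt_d9, sq_nonneg (4*Real.exp 1*u - 3),
      Real.exp_pos 1, Real.exp_one_gt_d9.le, mul_pos (Real.exp_pos 1) (Real.exp_pos 1)]
  refine hlog.trans ?_
  rw [Real.exp_add, Real.exp_log (by norm_num : (0:ℝ) < 2)]

lemma factor_bound {q : ℝ} (hq : 1 < q) (a b : ℕ) (hab : a ≠ b) :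
    (1 + q ^ b) * |q ^ a - q ^ b|⁻¹ ≤ q / (q - 1) * (1 + q⁻¹ ^ b) * q⁻¹ ^ (a - b) := by
  have hq0 : 0 < q := by linarith
  rcases lt_or_gt_of_ne hab with h | h
  · rw [Nat.sub_eq_zero_of_le h.le, pow_zero, mul_one]
    have hab' : q ^ a < q ^ b := pow_lt_pow_right₀ hq h
    rw [abs_of_neg (by linarith), neg_sub]
    set A := q ^ a with hA
    set B := q ^ (b - a) with hB
    have hqB : q ≤ B := le_self_pow₀ hq.le (by omega)
    have hA0 : 0 < A := pow_pos hq0 a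
    have hB0 : 0 < B := pow_pos hq0 _
    have hABA : q ^ b = A * B := by rw [hA, hB, ← pow_add]; congr 1; omega
    rw [hABA, inv_pow, hABA]
    have hden : 0 < A * B - A := by nlinarith
    have hrhs : q / (q-1) * (1 + (A*B)⁻¹) = q * (A*B+1) / ((q-1)*(A*B)) := by
      field_simp; try ring
    rw [hrhs, inv_eq_one_div, mul_one_div, div_le_div_iff₀ hden (mul_pos (show (0:ℝ)<q-1 by linarith) (mul_pos hA0 hB0))]
    nlinarith [mul_nonneg (sub_nonneg.2 hqB) (by positivity : (0:ℝ) ≤ A*(A*B+1))]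
  · have hab' : q ^ b < q ^ a := pow_lt_pow_right₀ hq h
    rw [abs_of_pos (by linarith)]
    set A := q ^ b with hA
    set B := q ^ (a - b) with hB
    have hqB : q ≤ B := le_self_pow₀ hq.le (by omega)
    have hA0 : 0 < A := pow_pos hq0 b
    have hB0 : 0 < B := pow_pos hq0 _
    have haeq : q ^ a = A * B := by rw [hA, hB, ← pow_add]; congr 1; omega
    rw [haeq, inv_pow, inv_pow, ← hA, ← hB]
    have hden : 0 < A * B - A := by nlinarith
    have hrhs : q / (q-1) * (1 + A⁻¹) * B⁻¹ = q * (A+1) / ((q-1)*A*B) := by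
      field_simp; try ring
    rw [hrhs, inv_eq_one_div, mul_one_div, div_le_div_iff₀ hden (mul_pos (mul_pos (show (0:ℝ)<q-1 by linarith) hA0) hB0)]
    nlinarith [mul_nonneg (sub_nonneg.2 hqB) (by positivity : (0:ℝ) ≤ A*(A+1))]

noncomputable def vnodes (q : ℝ) (K : ℕ) : Fin (K+1) → ℝ := fun m => q ^ (m:ℕ)

lemma basis_coeff_abs_sum {q : ℝ} (hq : 1 < q) (K : ℕ) (i : Fin (K+1)) :
    ∑ j : Fin (K+1), |(Lagrange.basis Finset.univ (vnodes q K) i).coeff (j:ℕ)|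
      ≤ ∏ m ∈ Finset.univ.erase i, ((1 + q ^ (m:ℕ)) * |q ^ (i:ℕ) - q ^ (m:ℕ)|⁻¹) := by
  unfold vnodes
  set v : Fin (K+1) → ℝ := fun m => q ^ (m:ℕ) with hv
  have hq0 : 0 < q := by linarith
  have hvpos : ∀ m : Fin (K+1), 0 < v m := fun m => pow_pos hq0 _
  set s : Finset (Fin (K+1)) := Finset.univ.erase i with hs
  have hcard : s.card = K := by
    rw [hs, card_erase_of_mem (mem_univ i), card_univ, Fintype.card_fin]
    omega
  -- decompose the basis polynomial
  have hb : Lagrange.basis Finset.univ v i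
      = C (∏ m ∈ s, (v i - v m)⁻¹) * ∏ m ∈ s, (X - C (v m)) := by
    rw [Lagrange.basis, ← hs]
    simp_rw [Lagrange.basisDivisor]
    rw [Finset.prod_mul_distrib, map_prod]
  set P : ℝ[X] := ∏ m ∈ s, (X - C (v m)) with hP
  set Q : ℝ[X] := ∏ m ∈ s, (X + C (v m)) with hQ
  -- coefficient comparison
  have hcoeff : ∀ j : Fin (K+1), |P.coeff (j:ℕ)| ≤ Q.coeff (j:ℕ) := by
    intro j
    have hj : (j:ℕ) ≤ s.card := by rw [hcard]; omega
    have h1 : P.coeff (j:ℕ) = ∑ t ∈ s.powersetCard (s.card - (j:ℕ)), ∏ m ∈ t, (-(v m)) := by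
      rw [hP]
      have : ∀ m : Fin (K+1), X - C (v m) = X + C (-(v m)) := by
        intro m; rw [map_neg, sub_eq_add_neg]
      simp_rw [this]
      exact Finset.prod_X_add_C_coeff s (fun m => -(v m)) hj
    have h2 : Q.coeff (j:ℕ) = ∑ t ∈ s.powersetCard (s.card - (j:ℕ)), ∏ m ∈ t, (v m) := by
      rw [hQ]; exact Finset.prod_X_add_C_coeff s (fun m => v m) hj
    rw [h1, h2]
    refine (Finset.abs_sum_le_sum_abs _ _).trans (le_of_eq ?_)
    refine Finset.sum_congr rfl fun t _ => ?_
    rw [Finset.abs_prod]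
    exact Finset.prod_congr rfl fun m _ => by rw [abs_neg, abs_of_pos (hvpos m)]
  -- sum of Q's coefficients equals its value at 1
  have hQdeg : Q.natDegree < K + 1 := by
    have h1 := Polynomial.natDegree_prod_le s (fun m => X + C (v m))
    rw [← hQ] at h1
    have h2 : ∑ m ∈ s, (X + C (v m)).natDegree = K := by
      simp [Polynomial.natDegree_X_add_C, hcard]
    omega
  have hQsum : ∑ j : Fin (K+1), Q.coeff (j:ℕ) = ∏ m ∈ s, (1 + v m) := by
    have := Polynomial.eval_eq_sum_range' hQdeg (1 : ℝ)
    simp only [one_pow, mul_one] at this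
    rw [Fin.sum_univ_eq_sum_range (fun j => Q.coeff j) (K+1), ← this, hQ, eval_prod]
    exact Finset.prod_congr rfl fun m _ => by simp
  -- put it together
  rw [hb]
  calc ∑ j : Fin (K+1), |(C (∏ m ∈ s, (v i - v m)⁻¹) * P).coeff (j:ℕ)|
      = ∑ j : Fin (K+1), |∏ m ∈ s, (v i - v m)⁻¹| * |P.coeff (j:ℕ)| := by
        simp_rw [Polynomial.coeff_C_mul, abs_mul]
    _ ≤ ∑ j : Fin (K+1), |∏ m ∈ s, (v i - v m)⁻¹| * Q.coeff (j:ℕ) := by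
        refine Finset.sum_le_sum fun j _ => ?_
        exact mul_le_mul_of_nonneg_left (hcoeff j) (abs_nonneg _)
    _ = |∏ m ∈ s, (v i - v m)⁻¹| * ∏ m ∈ s, (1 + v m) := by
        rw [← Finset.mul_sum, hQsum]
    _ = ∏ m ∈ s, ((1 + v m) * |v i - v m|⁻¹) := by
        rw [Finset.prod_mul_distrib, mul_comm, Finset.abs_prod]
        congr 1
        exact Finset.prod_congr rfl fun m _ => abs_inv _
    _ ≤ ∏ m ∈ s, ((1 + q ^ (m:ℕ)) * |q ^ (i:ℕ) - q ^ (m:ℕ)|⁻¹) := le_of_eq rfl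

lemma row_bound {q : ℝ} (hq : 1 < q) (K : ℕ) (i : Fin (K+1)) :
    ∑ j : Fin (K+1), |(Lagrange.basis Finset.univ (vnodes q K) i).coeff (j:ℕ)|
      ≤ (q/(q-1))^K * ((∏ m ∈ Finset.univ.erase i, (1 + q⁻¹ ^ (m:ℕ))) * q⁻¹ ^ (i:ℕ)) := by
  have hq0 : 0 < q := by linarith
  have hr0 : (0:ℝ) ≤ q⁻¹ := by positivity
  have hr1 : q⁻¹ < 1 := by rw [inv_lt_one_iff₀]; right; exact hq
  refine (basis_coeff_abs_sum hq K i).trans ?_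
  have h2 : ∏ m ∈ Finset.univ.erase i, ((1 + q^(m:ℕ)) * |q^(i:ℕ) - q^(m:ℕ)|⁻¹)
      ≤ ∏ m ∈ Finset.univ.erase i, (q/(q-1) * (1 + q⁻¹^(m:ℕ)) * q⁻¹^((i:ℕ)-(m:ℕ))) := by
    refine Finset.prod_le_prod (fun m _ => by positivity) (fun m hm => ?_)
    refine factor_bound hq (i:ℕ) (m:ℕ) fun h => (mem_erase.1 hm).1 (Fin.ext h.symm)
  refine h2.trans ?_
  have hcard : (Finset.univ.erase i).card = K := by
    rw [card_erase_of_mem (mem_univ i), card_univ, Fintype.card_fin]; omega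
  have hsum : (i:ℕ) ≤ ∑ m ∈ Finset.univ.erase i, ((i:ℕ) - (m:ℕ)) := by
    rcases Nat.eq_zero_or_pos (i:ℕ) with h0 | h0
    · simp [h0]
    · have h0' : (0 : Fin (K+1)) ∈ Finset.univ.erase i := by
        rw [mem_erase]
        refine ⟨fun h => ?_, mem_univ _⟩
        rw [← h] at h0; simp at h0
      have := Finset.single_le_sum (f := fun m : Fin (K+1) => (i:ℕ) - (m:ℕ))
        (fun _ _ => Nat.zero_le _) h0'
      simpa using this
  have hpow : ∏ m ∈ Finset.univ.erase i, q⁻¹ ^ ((i:ℕ) - (m:ℕ)) ≤ q⁻¹ ^ (i:ℕ) := by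
    rw [Finset.prod_pow_eq_pow_sum]
    exact pow_le_pow_of_le_one hr0 hr1.le hsum
  rw [Finset.prod_mul_distrib, Finset.prod_mul_distrib, Finset.prod_const, hcard]
  have hprodpos : (0:ℝ) ≤ ∏ m ∈ Finset.univ.erase i, (1 + q⁻¹^(m:ℕ)) := by
    exact Finset.prod_nonneg fun m _ => by positivity
  rw [mul_assoc]
  refine mul_le_mul_of_nonneg_left ?_ (pow_nonneg (div_nonneg hq0.le (by linarith)) K)
  exact mul_le_mul_of_nonneg_left hpow hprodpos

lemma sum_E_bound {q : ℝ} (hq : 1 < q) (K : ℕ) :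
    ∑ i : Fin (K+1), ((∏ m ∈ Finset.univ.erase i, (1 + q⁻¹ ^ (m:ℕ))) * q⁻¹ ^ (i:ℕ))
      ≤ Real.exp ((q-1)⁻¹) * (1 + 2*(q-1)⁻¹) := by
  have hq0 : 0 < q := by linarith
  have hr0 : (0:ℝ) ≤ q⁻¹ := by positivity
  have hr1 : q⁻¹ < 1 := by rw [inv_lt_one_iff₀]; right; exact hq
  set r : ℝ := q⁻¹ with hrdef
  set u : ℝ := (q-1)⁻¹ with hudef
  have hu0 : 0 < u := inv_pos.2 (by linarith)
  set W : ℝ := ∏ m ∈ Finset.univ.erase (0 : Fin (K+1)), (1 + r ^ (m:ℕ)) with hWdef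
  have hW1 : (1:ℝ) ≤ W := by
    rw [hWdef]
    calc (1:ℝ) = ∏ m ∈ Finset.univ.erase (0 : Fin (K+1)), (1:ℝ) := by rw [Finset.prod_const_one]
      _ ≤ _ := Finset.prod_le_prod (fun m _ => one_pos.le)
          (fun m _ => by nlinarith [pow_nonneg hr0 (m:ℕ)])
  have hsum0 : ∑ m ∈ Finset.univ.erase (0 : Fin (K+1)), r ^ (m:ℕ) ≤ u := by
    have h1 : r ^ ((0 : Fin (K+1)):ℕ) + ∑ m ∈ Finset.univ.erase (0 : Fin (K+1)), r ^ (m:ℕ)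
        = ∑ m : Fin (K+1), r ^ (m:ℕ) :=
      Finset.add_sum_erase Finset.univ (fun m : Fin (K+1) => r ^ (m:ℕ)) (mem_univ (0 : Fin (K+1)))
    have h2 : ∑ m : Fin (K+1), r ^ (m:ℕ) = ∑ j ∈ Finset.range (K+1), r ^ j :=
      Fin.sum_univ_eq_sum_range _ _
    have h3 := geomBound hr0 hr1 (K+1)
    have hq1 : q - 1 ≠ 0 := by linarith
    have h4 : (1 - r)⁻¹ = 1 + u := by
      rw [hrdef, hudef]
      rw [show (1 : ℝ) - q⁻¹ = (q-1)/q by field_simp, inv_div]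
      field_simp; ring
    simp only [Fin.val_zero, pow_zero] at h1
    linarith
  have hWe : W ≤ Real.exp u := by
    calc W ≤ ∏ m ∈ Finset.univ.erase (0 : Fin (K+1)), Real.exp (r ^ (m:ℕ)) := by
          refine Finset.prod_le_prod (fun m _ => by positivity) (fun m _ => ?_)
          have := Real.add_one_le_exp (r ^ (m:ℕ)); linarith
      _ = Real.exp (∑ m ∈ Finset.univ.erase (0 : Fin (K+1)), r ^ (m:ℕ)) :=
          (Real.exp_sum _ _).symm
      _ ≤ Real.exp u := Real.exp_le_exp.2 hsum0
  have hEi : ∀ i : Fin K, (∏ m ∈ Finset.univ.erase (i.succ), (1 + r ^ (m:ℕ)))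
      ≤ 2 * W := by
    intro i
    have h1 : ∏ m ∈ Finset.univ.erase (i.succ), (1 + r ^ (m:ℕ))
        ≤ ∏ m : Fin (K+1), (1 + r ^ (m:ℕ)) := by
      have he := Finset.mul_prod_erase Finset.univ
        (fun m : Fin (K+1) => 1 + r ^ (m:ℕ)) (mem_univ (i.succ))
      have hpos : (0:ℝ) ≤ ∏ m ∈ Finset.univ.erase (i.succ), (1 + r ^ (m:ℕ)) :=
        Finset.prod_nonneg fun m _ => by positivity
      have hone : (1:ℝ) ≤ 1 + r ^ ((i.succ : Fin (K+1)):ℕ) := by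
        nlinarith [pow_nonneg hr0 ((i.succ : Fin (K+1)):ℕ)]
      have he2 : (1 + r ^ ((i.succ : Fin (K+1)):ℕ)) * ∏ m ∈ Finset.univ.erase i.succ, (1 + r^(m:ℕ))
          = ∏ m : Fin (K+1), (1 + r^(m:ℕ)) := he
      nlinarith [he2, mul_nonneg (pow_nonneg hr0 ((i.succ : Fin (K+1)):ℕ)) hpos]
    have h2 : ∏ m : Fin (K+1), (1 + r ^ (m:ℕ)) = 2 * W := by
      rw [hWdef, ← Finset.mul_prod_erase _ _ (mem_univ (0 : Fin (K+1)))]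
      norm_num
    linarith
  have hgeo : ∑ i : Fin K, r ^ ((i.succ : Fin (K+1)):ℕ) ≤ u := by
    have h1 : ∑ i : Fin K, r ^ ((i.succ : Fin (K+1)):ℕ) = r * ∑ j ∈ Finset.range K, r ^ j := by
      simp_rw [Fin.val_succ]
      rw [Fin.sum_univ_eq_sum_range (fun j => r ^ (j+1)) K, Finset.mul_sum]
      exact Finset.sum_congr rfl fun j _ => by ring
    have h2 := geomBound hr0 hr1 K
    have h3 : r * (1 - r)⁻¹ = u := by
      rw [hrdef, hudef, show (1 : ℝ) - q⁻¹ = (q-1)/q by field_simp, inv_div]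
      rw [← mul_div_assoc, inv_mul_cancel₀ (ne_of_gt hq0), one_div]
    calc ∑ i : Fin K, r ^ ((i.succ : Fin (K+1)):ℕ) = r * ∑ j ∈ Finset.range K, r ^ j := h1
      _ ≤ r * (1-r)⁻¹ := by
          refine mul_le_mul_of_nonneg_left h2 hr0
      _ = u := h3
  calc ∑ i : Fin (K+1), ((∏ m ∈ Finset.univ.erase i, (1 + r ^ (m:ℕ))) * r ^ (i:ℕ))
      = (∏ m ∈ Finset.univ.erase (0:Fin (K+1)), (1 + r ^ (m:ℕ))) * r ^ ((0:Fin (K+1)):ℕ)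
        + ∑ i : Fin K, ((∏ m ∈ Finset.univ.erase (i.succ), (1 + r ^ (m:ℕ)))
            * r ^ ((i.succ : Fin (K+1)):ℕ)) := Fin.sum_univ_succ _
    _ ≤ W + ∑ i : Fin K, (2 * W) * r ^ ((i.succ : Fin (K+1)):ℕ) := by
        refine add_le_add (by simp [hWdef]) (Finset.sum_le_sum fun i _ => ?_)
        exact mul_le_mul_of_nonneg_right (hEi i) (pow_nonneg hr0 _)
    _ = W + 2 * W * ∑ i : Fin K, r ^ ((i.succ : Fin (K+1)):ℕ) := by rw [Finset.mul_sum]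
    _ ≤ W + 2 * W * u := by
        refine add_le_add le_rfl (mul_le_mul_of_nonneg_left hgeo (by linarith : (0:ℝ) ≤ 2 * W))
    _ = W * (1 + 2*u) := by ring
    _ ≤ Real.exp u * (1 + 2*u) := by
        refine mul_le_mul_of_nonneg_right hWe (by nlinarith)

/-- The `(K+1)×(K+1)` matrix with entries `e^{(i-1)(j-1)t}` (1-indexed). -/
noncomputable def Psi (t : ℝ) (K : ℕ) : Matrix (Fin (K + 1)) (Fin (K + 1)) ℝ :=
  Matrix.of fun i j : Fin (K + 1) => Real.exp ((i : ℝ) * (j : ℝ) * t)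

theorem Psi_inv_frobenius_norm_le (t : ℝ) (ht : 0 < t) (K : ℕ) (hK : 1 ≤ K) :
    Real.sqrt (∑ i : Fin (K + 1), ∑ j : Fin (K + 1), ((Psi t K)⁻¹ i j) ^ 2)
      ≤ (Real.exp (-2 * Real.exp 1 / (Real.exp t - 1) ^ 2))⁻¹ *
          (K : ℝ) * ((K : ℝ) + 1) * (Real.exp t / (Real.exp t - 1)) ^ K := by
  have hq : 1 < Real.exp t := by
    rw [← Real.exp_zero]; exact Real.exp_lt_exp.2 ht
  set q : ℝ := Real.exp t with hqdef
  have hq0 : (0:ℝ) < q := by linarith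
  have hq1 : (0:ℝ) < q - 1 := by linarith
  set v : Fin (K+1) → ℝ := vnodes q K with hvdef
  have hvinj : Set.InjOn v ↑(Finset.univ : Finset (Fin (K+1))) := by
    intro a _ b _ h
    have hm : StrictMono (fun n : ℕ => q ^ n) := fun m n hmn => pow_lt_pow_right₀ hq hmn
    exact Fin.ext (hm.injective h)
  have hPsi : Psi t K = Matrix.vandermonde v := by
    ext i j
    show Real.exp ((i : ℝ) * (j : ℝ) * t) = v i ^ (j:ℕ)
    rw [hvdef]
    show Real.exp ((i : ℝ) * (j : ℝ) * t) = (q ^ (i:ℕ)) ^ (j:ℕ)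
    rw [← pow_mul, hqdef, ← Real.exp_nat_mul]
    congr 1
    push_cast
    ring
  set B : Matrix (Fin (K+1)) (Fin (K+1)) ℝ :=
    Matrix.of (fun i j : Fin (K+1) => (Lagrange.basis Finset.univ v i).coeff (j:ℕ)) with hBdef
  have hdeg : ∀ i : Fin (K+1), (Lagrange.basis Finset.univ v i).natDegree < K + 1 := by
    intro i
    rw [Lagrange.natDegree_basis hvinj (mem_univ i), card_univ, Fintype.card_fin]
    omega
  have hleft : B * Psi t K = 1 := by
    ext i k
    rw [hPsi, Matrix.mul_apply]
    have hsum : ∑ j : Fin (K+1), B i j * Matrix.vandermonde v j k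
        = (Lagrange.basis Finset.univ v i).eval (v k) := by
      rw [Polynomial.eval_eq_sum_range' (hdeg i) (v k),
        ← Fin.sum_univ_eq_sum_range (fun j => (Lagrange.basis Finset.univ v i).coeff j * v k ^ j) (K+1)]
      refine Finset.sum_congr rfl fun j _ => ?_
      show (Lagrange.basis Finset.univ v i).coeff (j:ℕ) * v j ^ (k:ℕ)
          = (Lagrange.basis Finset.univ v i).coeff (j:ℕ) * v k ^ (j:ℕ)
      rw [hvdef]
      show _ * (q ^ (j:ℕ)) ^ (k:ℕ) = _ * (q ^ (k:ℕ)) ^ (j:ℕ)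
      rw [← pow_mul, ← pow_mul, Nat.mul_comm]
    rw [hsum]
    by_cases hik : i = k
    · subst hik
      rw [Lagrange.eval_basis_self hvinj (mem_univ i), Matrix.one_apply_eq]
    · rw [Lagrange.eval_basis_of_ne hik (mem_univ k), Matrix.one_apply_ne hik]
  have hinv : (Psi t K)⁻¹ = B := Matrix.inv_eq_left_inv hleft
  -- reduce sqrt of sum of squares to sum of abs values
  set S : ℝ := ∑ i : Fin (K+1), ∑ j : Fin (K+1), |B i j| with hSdef
  have hS0 : 0 ≤ S := Finset.sum_nonneg fun i _ => Finset.sum_nonneg fun j _ => abs_nonneg _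
  have habs_le : ∀ i j : Fin (K+1), |B i j| ≤ S := by
    intro i j
    calc |B i j| ≤ ∑ j' : Fin (K+1), |B i j'| :=
          Finset.single_le_sum (fun j' _ => abs_nonneg (B i j')) (mem_univ j)
      _ ≤ S := Finset.single_le_sum
          (f := fun i' => ∑ j' : Fin (K+1), |B i' j'|)
          (fun i' _ => Finset.sum_nonneg fun j' _ => abs_nonneg _) (mem_univ i)
  have hsq : ∑ i : Fin (K+1), ∑ j : Fin (K+1), (B i j)^2 ≤ S^2 := by
    have h1 : ∀ i j : Fin (K+1), (B i j)^2 ≤ |B i j| * S := by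
      intro i j
      have h2 : (B i j)^2 = |B i j| * |B i j| := by rw [sq, ← abs_mul_abs_self]
      rw [h2]
      exact mul_le_mul_of_nonneg_left (habs_le i j) (abs_nonneg _)
    calc ∑ i : Fin (K+1), ∑ j : Fin (K+1), (B i j)^2
        ≤ ∑ i : Fin (K+1), ∑ j : Fin (K+1), |B i j| * S :=
          Finset.sum_le_sum fun i _ => Finset.sum_le_sum fun j _ => h1 i j
      _ = S * S := by simp_rw [← Finset.sum_mul]; rfl
      _ = S^2 := (sq S).symm
  have hsqrt : Real.sqrt (∑ i : Fin (K+1), ∑ j : Fin (K+1), ((Psi t K)⁻¹ i j)^2) ≤ S := by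
    rw [hinv]
    calc Real.sqrt (∑ i : Fin (K+1), ∑ j : Fin (K+1), (B i j)^2)
        ≤ Real.sqrt (S^2) := Real.sqrt_le_sqrt hsq
      _ = S := Real.sqrt_sq hS0
  -- bound S
  have hSbound : S ≤ (q/(q-1))^K * (Real.exp ((q-1)⁻¹) * (1 + 2*(q-1)⁻¹)) := by
    calc S ≤ ∑ i : Fin (K+1), (q/(q-1))^K *
            ((∏ m ∈ Finset.univ.erase i, (1 + q⁻¹ ^ (m:ℕ))) * q⁻¹ ^ (i:ℕ)) := by
          refine Finset.sum_le_sum fun i _ => ?_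
          exact row_bound hq K i
      _ = (q/(q-1))^K * ∑ i : Fin (K+1),
            ((∏ m ∈ Finset.univ.erase i, (1 + q⁻¹ ^ (m:ℕ))) * q⁻¹ ^ (i:ℕ)) := by
          rw [Finset.mul_sum]
      _ ≤ (q/(q-1))^K * (Real.exp ((q-1)⁻¹) * (1 + 2*(q-1)⁻¹)) := by
          refine mul_le_mul_of_nonneg_left (sum_E_bound hq K) ?_
          exact pow_nonneg (div_nonneg hq0.le hq1.le) K
  refine hsqrt.trans (hSbound.trans ?_)
  -- final numeric step
  have hC : (Real.exp (-2 * Real.exp 1 / (q - 1) ^ 2))⁻¹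
      = Real.exp (2 * Real.exp 1 * ((q-1)⁻¹)^2) := by
    rw [← Real.exp_neg]
    congr 1
    rw [inv_pow, ← div_eq_mul_inv]
    ring
  rw [hC]
  have hanal := anal ((q-1)⁻¹)
  have hKK : (2:ℝ) ≤ (K:ℝ) * ((K:ℝ)+1) := by
    have h1 : (1:ℝ) ≤ (K:ℝ) := by exact_mod_cast hK
    nlinarith
  have hpowpos : (0:ℝ) < (q/(q-1))^K := pow_pos (div_pos hq0 hq1) K
  have hexp : (0:ℝ) < Real.exp (2 * Real.exp 1 * ((q-1)⁻¹)^2) := Real.exp_pos _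
  calc (q/(q-1))^K * (Real.exp ((q-1)⁻¹) * (1 + 2*(q-1)⁻¹))
      ≤ (q/(q-1))^K * (2 * Real.exp (2 * Real.exp 1 * ((q-1)⁻¹)^2)) :=
        mul_le_mul_of_nonneg_left hanal hpowpos.le
    _ ≤ (q/(q-1))^K * (((K:ℝ) * ((K:ℝ)+1)) * Real.exp (2 * Real.exp 1 * ((q-1)⁻¹)^2)) := by
        refine mul_le_mul_of_nonneg_left ?_ hpowpos.le
        exact mul_le_mul_of_nonneg_right hKK hexp.le
    _ = Real.exp (2 * Real.exp 1 * ((q-1)⁻¹)^2) * (K:ℝ) * ((K:ℝ)+1) * (q/(q-1))^K := by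
        ring
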